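/- Let A ≥ 0 and ι > 0 be real numbers. The function W : (0, ∞) → ℝ defined by W(ρ) = A / (ρ·log₂(1 + ι/ρ)) is convex on (0, ∞), where log₂ denotes the base-2 logarithm. -/

import Mathlib

theorem transmission_energy_convex_in_bandwidth (A ι : ℝ) (hA : 0 ≤ A) (hι : 0 < ι) :
    ConvexOn ℝ (Set.Ioi (0 : ℝ)) (fun ρ : ℝ => A / (ρ * Real.logb 2 (1 + ι / ρ))) := by
  set U : ℝ → ℝ := fun t => t * Real.logb 2 (1 + ι / t) with hU
  have hUpos : ∀ t : ℝ, 0 < t → 0 < U t := by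
    intro t ht
    exact mul_pos ht (Real.logb_pos (by norm_num)
      (by linarith [div_pos hι ht]))
  refine ⟨convex_Ioi 0, ?_⟩
  intro x hx y hy a b ha hb hab
  simp only [Set.mem_Ioi] at hx hy
  rcases ha.eq_or_lt with rfl | ha'
  · simp at hab; simp [hab]
  rcases hb.eq_or_lt with rfl | hb'
  · simp at hab; simp [hab]
  have hb1 : b = 1 - a := by linarith
  have hs : 0 < a * x + b * y := by nlinarith [mul_pos ha' hx, mul_pos hb' hy]
  have hUx := hUpos x hx
  have hUy := hUpos y hy
  have hUs := hUpos _ hs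
  -- concavity of U: a * U x + b * U y ≤ U (a*x + b*y)
  have hconc : a * U x + b * U y ≤ U (a * x + b * y) := by
    have hlog2 : (0:ℝ) < Real.log 2 := Real.log_pos (by norm_num)
    have key : a * x * Real.log (1 + ι / x) + b * y * Real.log (1 + ι / y)
        ≤ (a * x + b * y) * Real.log (1 + ι / (a * x + b * y)) := by
      have hu : (1 + ι / x) ∈ Set.Ioi (0:ℝ) := by
        have := div_pos hι hx; simp only [Set.mem_Ioi]; linarith
      have hv : (1 + ι / y) ∈ Set.Ioi (0:ℝ) := by
        have := div_pos hι hy; simp only [Set.mem_Ioi]; linarith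
      have ha'' : 0 ≤ a * x / (a * x + b * y) := by
        exact div_nonneg (by nlinarith) hs.le
      have hb'' : 0 ≤ b * y / (a * x + b * y) := by
        exact div_nonneg (by nlinarith) hs.le
      have hab'' : a * x / (a * x + b * y) + b * y / (a * x + b * y) = 1 := by
        field_simp
      have hcl := strictConcaveOn_log_Ioi.concaveOn.2 hu hv ha'' hb'' hab''
      simp only [smul_eq_mul] at hcl
      have hcomb : a * x / (a * x + b * y) * (1 + ι / x)
          + b * y / (a * x + b * y) * (1 + ι / y) = 1 + ι / (a * x + b * y) := by
        have hs2 : (0:ℝ) < a * x + (1 - a) * y := by rw [← hb1]; exact hs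
        rw [hb1]
        field_simp [hx.ne', hy.ne', hs2.ne']
        ring
      rw [hcomb] at hcl
      have hmul := mul_le_mul_of_nonneg_left hcl (le_of_lt hs)
      calc a * x * Real.log (1 + ι / x) + b * y * Real.log (1 + ι / y)
          = (a * x + b * y) * (a * x / (a * x + b * y) * Real.log (1 + ι / x)
            + b * y / (a * x + b * y) * Real.log (1 + ι / y)) := by
            field_simp
        _ ≤ (a * x + b * y) * Real.log (1 + ι / (a * x + b * y)) := hmul
    have hUeq : ∀ t : ℝ, U t = t * Real.log (1 + ι / t) / Real.log 2 := by
      intro t; simp [hU, Real.logb, mul_div_assoc]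
    have hsum : a * U x + b * U y
        = (a * (x * Real.log (1 + ι / x)) + b * (y * Real.log (1 + ι / y))) / Real.log 2 := by
      rw [hUeq x, hUeq y]; ring
    rw [hsum, hUeq]
    exact (div_le_div_iff_of_pos_right hlog2).mpr (by linarith [key])
  -- combine with convexity of `A / u`
  have hsum : 0 < a * U x + b * U y := by nlinarith [mul_pos ha' hUx, mul_pos hb' hUy]
  calc A / U (a * x + b * y) ≤ A / (a * U x + b * U y) :=
        div_le_div_of_nonneg_left hA hsum hconc
    _ ≤ a * (A / U x) + b * (A / U y) := by
        rw [div_le_iff₀ hsum]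
        have h1 : a * (A / U x) + b * (A / U y)
            = A * (a * U y + b * U x) / (U x * U y) := by
          field_simp
        rw [h1, div_mul_eq_mul_div, le_div_iff₀ (by positivity)]
        rw [hb1]
        nlinarith [mul_nonneg hA (mul_nonneg (mul_nonneg ha'.le
          (by linarith : (0:ℝ) ≤ 1 - a)) (sq_nonneg (U x - U y)))]
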